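/- Every complex eigenvalue μ of the matrix A + R satisfies |μ| ≤ 1, and 1 is a complex eigenvalue of A + R; hence the spectral radius of A + R equals 1. -/

import Mathlib

open Matrix

attribute [local instance] Matrix.linftyOpNormedAddCommGroup Matrix.linftyOpNormedSpace
  Matrix.linftyOpNormedRing Matrix.linftyOpNormedAlgebra

private def entryLM (n : ℕ) (i j : Fin n) : Matrix (Fin n) (Fin n) ℝ →ₗ[ℝ] ℝ where
  toFun M := M i j
  map_add' _ _ := rfl
  map_smul' _ _ := rfl

private lemma pow_entry_nonneg {n : ℕ} {K : Matrix (Fin n) (Fin n) ℝ}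
    (h : ∀ i j, 0 ≤ K i j) : ∀ m i j, 0 ≤ (K ^ m) i j := by
  intro m
  induction m with
  | zero =>
    intro i j
    rw [pow_zero]
    by_cases hij : i = j <;> simp [Matrix.one_apply, hij]
  | succ m ih =>
    intro i j
    rw [pow_succ, Matrix.mul_apply]
    exact Finset.sum_nonneg fun k _ => mul_nonneg (ih i k) (h k j)

private lemma inv_one_sub_entry_nonneg {n : ℕ} {K : Matrix (Fin n) (Fin n) ℝ}
    (hnn : ∀ i j, 0 ≤ K i j) (hnorm : ‖K‖ < 1) (i j : Fin n) :
    0 ≤ (1 - K)⁻¹ i j := by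
  rw [Matrix.nonsing_inv_eq_ringInverse]
  have hsum : HasSum (fun m : ℕ => K ^ m) (Ring.inverse (1 - K)) :=
    hasSum_geom_series_inverse K hnorm
  have h2 : HasSum (fun m : ℕ => (K ^ m) i j) ((Ring.inverse (1 - K)) i j) :=
    (LinearMap.toContinuousLinearMap (entryLM n i j)).hasSum hsum
  exact hasSum_le (fun m => pow_entry_nonneg hnn m i j) hasSum_zero h2

/-- Every complex eigenvalue `μ` of `A + R` satisfies `|μ| ≤ 1`,
and `1` is a complex eigenvalue of `A + R`; hence the spectral radius of
`A + R` equals `1`. -/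
theorem stmt_6 (n : ℕ) (hn : 1 ≤ n)
    (F : Matrix (Fin n) (Fin n) ℝ)
    (hFnonneg : ∀ i j, 0 ≤ F i j)
    (hFrow : ∀ i, ∑ j, F i j = 1)
    (b : Fin n → ℝ) (hb0 : ∀ j, 0 ≤ b j) (hb1 : ∀ j, b j < 1)
    (K : Matrix (Fin n) (Fin n) ℝ)
    (hK : ∀ i j, K i j = F i j * b j)
    (hInv : IsUnit (1 - K))
    (S : Matrix (Fin n) (Fin n) ℝ)
    (hS : S = (1 - K)⁻¹ * F)
    (A R : Matrix (Fin n) (Fin n) ℝ)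
    (hA : ∀ i j, A i j = (1 - b i) * S i j * (1 - b j))
    (hR : ∀ i j, R i j = (1 - b i) * S i j * b j) :
    (∀ μ : ℂ, μ ∈ spectrum ℂ ((A + R).map Complex.ofReal) → ‖μ‖ ≤ 1) ∧
    (1 : ℂ) ∈ spectrum ℂ ((A + R).map Complex.ofReal) ∧
    IsGreatest ((fun z : ℂ => ‖z‖) '' spectrum ℂ ((A + R).map Complex.ofReal)) 1 := by
  have hb1' : ∀ j, (0:ℝ) < 1 - b j := fun j => by linarith [hb1 j]
  -- max of b
  obtain ⟨jm, -, hjm⟩ := Finset.exists_max_image Finset.univ b ⟨⟨0, hn⟩, Finset.mem_univ _⟩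
  have hjm' : ∀ j, b j ≤ b jm := fun j => hjm j (Finset.mem_univ j)
  -- norm of K < 1
  have hKnn : ∀ i j, 0 ≤ K i j := fun i j => by
    rw [hK]; exact mul_nonneg (hFnonneg i j) (hb0 j)
  have hrowK : ∀ i, ∑ j, K i j ≤ b jm := by
    intro i
    calc ∑ j, K i j ≤ ∑ j, F i j * b jm := by
          refine Finset.sum_le_sum fun j _ => ?_
          rw [hK]
          exact mul_le_mul_of_nonneg_left (hjm' j) (hFnonneg i j)
      _ = b jm := by rw [← Finset.sum_mul, hFrow, one_mul]
  have hKnorm : ‖K‖ < 1 := by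
    rw [Matrix.linfty_opNorm_def]
    rw [show (1:ℝ) = ((1 : NNReal) : ℝ) by norm_num, NNReal.coe_lt_coe]
    refine Finset.sup_lt_iff (by norm_num) |>.mpr fun i _ => ?_
    have h : ((∑ j, ‖K i j‖₊ : NNReal) : ℝ) < 1 := by
      push_cast
      have h2 : ∑ j, ‖K i j‖ = ∑ j, K i j := by
        refine Finset.sum_congr rfl fun j _ => ?_
        rw [Real.norm_eq_abs, abs_of_nonneg (hKnn i j)]
      rw [h2]
      exact lt_of_le_of_lt (hrowK i) (hb1 jm)
    exact_mod_cast h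
  -- S has nonnegative entries
  have hSnn : ∀ i j, 0 ≤ S i j := by
    intro i j
    rw [hS, Matrix.mul_apply]
    exact Finset.sum_nonneg fun k _ =>
      mul_nonneg (inv_one_sub_entry_nonneg hKnn hKnorm i k) (hFnonneg k j)
  -- row sums: ∑ j, S i j * (1 - b j) = 1
  have hdetInv : IsUnit (1 - K).det := (Matrix.isUnit_iff_isUnit_det _).mp hInv
  have hrowS : ∀ i, ∑ j, S i j * (1 - b j) = 1 := by
    have h1 : (1 - K).mulVec (fun _ => (1:ℝ)) = F.mulVec (fun j => 1 - b j) := by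
      funext i
      simp only [Matrix.mulVec, dotProduct, Matrix.sub_apply, mul_one]
      rw [Finset.sum_sub_distrib]
      have e1 : ∑ j, (1 : Matrix (Fin n) (Fin n) ℝ) i j = 1 := by
        simp [Matrix.one_apply]
      rw [e1]
      have e2 : ∑ j, F i j * (1 - b j) = ∑ j, F i j - ∑ j, K i j := by
        rw [← Finset.sum_sub_distrib]
        refine Finset.sum_congr rfl fun j _ => by rw [hK]; ring
      rw [e2, hFrow]
    have h2 : S.mulVec (fun j => 1 - b j) = fun _ => (1:ℝ) := by
      rw [hS, ← Matrix.mulVec_mulVec, ← h1, Matrix.mulVec_mulVec,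
        Matrix.nonsing_inv_mul _ hdetInv, Matrix.one_mulVec]
    intro i
    have := congrFun h2 i
    simpa only [Matrix.mulVec, dotProduct] using this
  -- the matrix entries
  have hM : ∀ i j, (A + R) i j = (1 - b i) * S i j := by
    intro i j
    simp only [Matrix.add_apply, hA, hR]
    ring
  set Mc := (A + R).map Complex.ofReal with hMc
  have hMcapply : ∀ i j, Mc i j = (((1 - b i) * S i j : ℝ) : ℂ) := by
    intro i j
    simp [hMc, Matrix.map_apply, hM]
  -- Part 1: eigenvalue bound
  have part1 : ∀ μ : ℂ, μ ∈ spectrum ℂ Mc → ‖μ‖ ≤ 1 := by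
    intro μ hμ
    rw [spectrum.mem_iff] at hμ
    have hdet : (algebraMap ℂ (Matrix (Fin n) (Fin n) ℂ) μ - Mc).det = 0 := by
      by_contra hd
      exact hμ ((Matrix.isUnit_iff_isUnit_det _).mpr (isUnit_iff_ne_zero.mpr hd))
    obtain ⟨v, hv0, hv⟩ := (Matrix.exists_mulVec_eq_zero_iff).mpr hdet
    have halg : algebraMap ℂ (Matrix (Fin n) (Fin n) ℂ) μ = μ • 1 :=
      Algebra.algebraMap_eq_smul_one μ
    have heig : ∀ i, μ * v i = ∑ j, Mc i j * v j := by
      intro i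
      have h := congrFun hv i
      rw [halg, Matrix.sub_mulVec, Matrix.smul_mulVec, Matrix.one_mulVec] at h
      simp only [Pi.sub_apply, Pi.smul_apply, smul_eq_mul, Pi.zero_apply,
        Matrix.mulVec, dotProduct, sub_eq_zero] at h
      exact h
    set w : Fin n → ℂ := fun j => v j / ((1 - b j : ℝ) : ℂ) with hw
    have hden : ∀ j, ((1 - b j : ℝ) : ℂ) ≠ 0 := fun j =>
      Complex.ofReal_ne_zero.mpr (ne_of_gt (hb1' j))
    have hvw : ∀ j, v j = ((1 - b j : ℝ) : ℂ) * w j := by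
      intro j
      rw [hw]
      rw [mul_div_cancel₀ _ (hden j)]
    obtain ⟨i0, -, hi0⟩ := Finset.exists_max_image Finset.univ
      (fun j => ‖w j‖) ⟨⟨0, hn⟩, Finset.mem_univ _⟩
    have hi0' : ∀ j, ‖w j‖ ≤ ‖w i0‖ :=
      fun j => hi0 j (Finset.mem_univ j)
    have hwpos : 0 < ‖w i0‖ := by
      obtain ⟨k, hk⟩ := Function.ne_iff.mp hv0
      have hwk : w k ≠ 0 := by
        rw [hw]
        exact div_ne_zero hk (hden k)
      exact lt_of_lt_of_le (norm_pos_iff.mpr hwk) (hi0' k)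
    have key : μ * w i0 = ∑ j, ((S i0 j * (1 - b j) : ℝ) : ℂ) * w j := by
      have h1 := heig i0
      rw [hvw i0] at h1
      have h2 : ∑ j, Mc i0 j * v j
          = ((1 - b i0 : ℝ) : ℂ) * ∑ j, ((S i0 j * (1 - b j) : ℝ) : ℂ) * w j := by
        rw [Finset.mul_sum]
        refine Finset.sum_congr rfl fun j _ => ?_
        rw [hMcapply, hvw j]
        push_cast
        ring
      rw [h2] at h1
      apply mul_left_cancel₀ (hden i0)
      rw [← h1]; ring
    have habs : ‖μ‖ * ‖w i0‖ ≤ ‖w i0‖ := by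
      calc ‖μ‖ * ‖w i0‖ = ‖μ * w i0‖ := (norm_mul _ _).symm
        _ = ‖∑ j, ((S i0 j * (1 - b j) : ℝ) : ℂ) * w j‖ := by rw [key]
        _ ≤ ∑ j, ‖((S i0 j * (1 - b j) : ℝ) : ℂ) * w j‖ :=
            norm_sum_le _ _
        _ = ∑ j, S i0 j * (1 - b j) * ‖w j‖ := by
            refine Finset.sum_congr rfl fun j _ => ?_
            rw [norm_mul, Complex.norm_real, Real.norm_eq_abs,
              abs_of_nonneg (mul_nonneg (hSnn i0 j) (le_of_lt (hb1' j)))]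
        _ ≤ ∑ j, S i0 j * (1 - b j) * ‖w i0‖ := by
            refine Finset.sum_le_sum fun j _ => ?_
            exact mul_le_mul_of_nonneg_left (hi0' j)
              (mul_nonneg (hSnn i0 j) (le_of_lt (hb1' j)))
        _ = ‖w i0‖ := by
            rw [← Finset.sum_mul, hrowS, one_mul]
    nlinarith [hwpos, habs]
  -- Part 2: 1 is an eigenvalue
  have part2 : (1 : ℂ) ∈ spectrum ℂ Mc := by
    rw [spectrum.mem_iff]
    intro hu
    have hdet := (Matrix.isUnit_iff_isUnit_det _).mp hu
    set v : Fin n → ℂ := fun j => ((1 - b j : ℝ) : ℂ) with hv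
    have hv0 : v ≠ 0 := by
      intro h
      have := congrFun h ⟨0, hn⟩
      simp only [hv, Pi.zero_apply] at this
      exact (Complex.ofReal_ne_zero.mpr (ne_of_gt (hb1' ⟨0, hn⟩))) this
    have hker : (algebraMap ℂ (Matrix (Fin n) (Fin n) ℂ) 1 - Mc).mulVec v = 0 := by
      funext i
      have halg : algebraMap ℂ (Matrix (Fin n) (Fin n) ℂ) 1 = 1 := map_one _
      rw [halg, Matrix.sub_mulVec, Matrix.one_mulVec]
      have hSum : ∑ j, Mc i j * v j = v i := by
        have : ∑ j, Mc i j * v j = (((1 - b i) * ∑ j, S i j * (1 - b j) : ℝ) : ℂ) := by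
          push_cast
          rw [Finset.mul_sum]
          refine Finset.sum_congr rfl fun j _ => ?_
          simp only [hMcapply, hv]
          push_cast
          ring
        rw [this, hrowS, mul_one]
      have : (Mc.mulVec v) i = v i := by
        simpa only [Matrix.mulVec, dotProduct] using hSum
      simp [this]
    have hdet0 : (algebraMap ℂ (Matrix (Fin n) (Fin n) ℂ) 1 - Mc).det = 0 :=
      (Matrix.exists_mulVec_eq_zero_iff).mp ⟨v, hv0, hker⟩
    rw [hdet0] at hdet
    exact (isUnit_iff_ne_zero.mp hdet) rfl
  refine ⟨part1, part2, ⟨1, part2, norm_one⟩, ?_⟩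
  rintro x ⟨μ, hμ, rfl⟩
  exact part1 μ hμ
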